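/- In a minimum-length covering strategy for a tree with k robots, no robot traverses any edge of the tree more than twice. -/

import Mathlib

open Finset

variable {V : Type*}

/-- The list of consecutive steps of a walk given as a list of vertices. -/
def wsteps (W : List V) : List (V × V) := W.zip W.tail

/-- A walk on a graph: a nonempty list of vertices in which consecutive
entries are equal or adjacent. -/
def IsWalk (G : SimpleGraph V) (W : List V) : Prop :=
  W ≠ [] ∧ ∀ p ∈ wsteps W, p.1 = p.2 ∨ G.Adj p.1 p.2

/-- The length of a walk: the number of position-changing moves. -/
def wlen [DecidableEq V] (W : List V) : ℕ :=
  (wsteps W).countP (fun p => decide (p.1 ≠ p.2))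

/-- The number of times a walk traverses the edge `{x, y}` (in either direction). -/
def trav [DecidableEq V] (W : List V) (x y : V) : ℕ :=
  (wsteps W).countP (fun p => decide ((p.1 = x ∧ p.2 = y) ∨ (p.1 = y ∧ p.2 = x)))

/-- The number of times a walk traverses the edge `(x, y)` from `x` to `y`. -/
def dirTrav [DecidableEq V] (W : List V) (x y : V) : ℕ :=
  (wsteps W).countP (fun p => decide (p.1 = x ∧ p.2 = y))

/-- A tuple of walks covers the graph: every vertex appears in some walk. -/
def Covers {k : ℕ} (S : Fin k → List V) : Prop := ∀ v : V, ∃ i, v ∈ S i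

/-- The total length of a strategy: the sum of the lengths of the walks. -/
def slen [DecidableEq V] {k : ℕ} (S : Fin k → List V) : ℕ := ∑ i, wlen (S i)

/-- A minimum-length covering strategy: a tuple of walks covering all vertices whose
total length is no larger than that of any covering strategy with the same starts. -/
def IsMinCover [DecidableEq V] (G : SimpleGraph V) {k : ℕ} (S : Fin k → List V) : Prop :=
  (∀ i, IsWalk G (S i)) ∧ Covers S ∧
    ∀ S' : Fin k → List V, (∀ i, IsWalk G (S' i)) → Covers S' →
      (∀ i, (S' i).head? = (S i).head?) → slen S ≤ slen S'

/-! ### Auxiliary lemmas -/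

lemma wsteps_nil' : wsteps ([] : List V) = [] := rfl

lemma wsteps_single (a : V) : wsteps [a] = [] := rfl

lemma wsteps_cons_cons (a b : V) (l : List V) :
    wsteps (a :: b :: l) = (a, b) :: wsteps (b :: l) := rfl

lemma wsteps_append (P : List V) (v : V) (Q : List V) :
    wsteps (P ++ v :: Q) = wsteps (P ++ [v]) ++ wsteps (v :: Q) := by
  induction P with
  | nil => simp [wsteps_single]
  | cons a P ih =>
    cases P with
    | nil => simp [wsteps_cons_cons, wsteps_single]
    | cons b P' =>
      simp only [List.cons_append, wsteps_cons_cons] at ih ⊢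
      rw [ih]

lemma wsteps_concat (P : List V) (a : V) :
    wsteps (P ++ [a]) = wsteps P ++ (P.getLast?.map (fun b => (b, a))).toList := by
  induction P with
  | nil => simp [wsteps_nil', wsteps_single]
  | cons b P ih =>
    cases P with
    | nil => simp [wsteps_single, wsteps_cons_cons]
    | cons c P' =>
      simp only [List.cons_append, wsteps_cons_cons] at ih ⊢
      rw [ih]
      simp [List.getLast?]

lemma wsteps_reverse (l : List V) :
    wsteps l.reverse = ((wsteps l).map Prod.swap).reverse := by
  induction l with
  | nil => simp [wsteps_nil']
  | cons a t ih =>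
    cases t with
    | nil => simp [wsteps_single]
    | cons b t' =>
      have : (a :: b :: t').reverse = (b :: t').reverse ++ [a] := by simp
      rw [this, wsteps_concat, ih]
      simp [wsteps_cons_cons, List.getLast?_reverse]

lemma dirTrav_eq_count [DecidableEq V] (L : List V) (x y : V) :
    dirTrav L x y = List.count (x, y) (wsteps L) := by
  rw [dirTrav, List.count]
  apply List.countP_congr
  intro p _
  simp [Prod.ext_iff, beq_iff_eq]

lemma splitFirst [DecidableEq V] {x y : V} : ∀ L : List V, (x, y) ∈ wsteps L →
    ∃ A B, L = A ++ x :: y :: B ∧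
      List.count (x, y) (wsteps L) = List.count (x, y) (wsteps (y :: B)) + 1 := by
  intro L
  induction L with
  | nil => simp [wsteps]
  | cons a l ih =>
    cases l with
    | nil => simp [wsteps]
    | cons b l' =>
      rw [wsteps_cons_cons]
      intro hmem
      by_cases h : (a, b) = (x, y)
      · obtain ⟨rfl, rfl⟩ := Prod.mk.injEq a b x y ▸ h
        exact ⟨[], l', by simp, by rw [List.count_cons_self]⟩
      · have hmem' : (x, y) ∈ wsteps (b :: l') := by
          rcases List.mem_cons.mp hmem with h' | h'
          · exact absurd h'.symm h
          · exact h'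
        obtain ⟨A', B', hEq, hcnt⟩ := ih hmem'
        refine ⟨a :: A', B', by rw [List.cons_append, ← hEq], ?_⟩
        rw [List.count_cons_of_ne (by exact fun hc => h hc), ← hcnt]

lemma split2 [DecidableEq V] {x y : V} (hxy : x ≠ y) (L : List V)
    (h2 : 2 ≤ dirTrav L x y) :
    ∃ A C D, L = A ++ x :: y :: C ++ x :: y :: D := by
  rw [dirTrav_eq_count] at h2
  have hmem : (x, y) ∈ wsteps L := by
    rw [← List.count_pos_iff]; omega
  obtain ⟨A, B, rfl, hcnt⟩ := splitFirst L hmem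
  have hmem2 : (x, y) ∈ wsteps (y :: B) := by
    rw [← List.count_pos_iff]; omega
  obtain ⟨A₂, B₂, hEq2, -⟩ := splitFirst (y :: B) hmem2
  cases A₂ with
  | nil => exact absurd (List.cons.injEq .. ▸ hEq2).1 hxy.symm
  | cons c A₂' =>
    obtain ⟨rfl, rfl⟩ : y = c ∧ B = A₂' ++ x :: y :: B₂ := by
      have := (List.cons.injEq .. ▸ hEq2)
      exact ⟨this.1, this.2⟩
    exact ⟨A, A₂', B₂, by simp⟩

lemma surgery [DecidableEq V] (G : SimpleGraph V) {W : List V} {x y : V} (hxy : x ≠ y)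
    (hW : IsWalk G W) (h2 : 2 ≤ dirTrav W x y) :
    ∃ W', IsWalk G W' ∧ W'.head? = W.head? ∧ (∀ v ∈ W, v ∈ W') ∧ wlen W' + 2 ≤ wlen W := by
  obtain ⟨A, C, D, rfl⟩ := split2 hxy W h2
  have h1 : wsteps (A ++ x :: y :: C ++ x :: y :: D)
      = wsteps (A ++ [x]) ++ (x,y) :: (wsteps (y :: C ++ [x]) ++ (x,y) :: wsteps (y :: D)) := by
    rw [show (A ++ x :: y :: C ++ x :: y :: D : List V)
          = A ++ x :: (y :: (C ++ x :: y :: D)) by simp,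
      wsteps_append A x (y :: (C ++ x :: y :: D)),
      wsteps_cons_cons x y (C ++ x :: y :: D),
      show (y :: (C ++ x :: y :: D) : List V) = (y :: C) ++ x :: (y :: D) by simp,
      wsteps_append (y :: C) x (y :: D), wsteps_cons_cons x y D]
  have h2' : wsteps (A ++ x :: x :: C.reverse ++ y :: y :: D)
      = wsteps (A ++ [x]) ++ (x,x) :: (wsteps ((y :: C ++ [x]).reverse) ++ (y,y) :: wsteps (y :: D)) := by
    rw [show (y :: C ++ [x]).reverse = (x :: C.reverse) ++ [y] by simp,
      show (A ++ x :: x :: C.reverse ++ y :: y :: D : List V)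
          = A ++ x :: (x :: (C.reverse ++ y :: y :: D)) by simp,
      wsteps_append A x (x :: (C.reverse ++ y :: y :: D)),
      wsteps_cons_cons x x (C.reverse ++ y :: y :: D),
      show (x :: (C.reverse ++ y :: y :: D) : List V)
          = (x :: C.reverse) ++ y :: (y :: D) by simp,
      wsteps_append (x :: C.reverse) y (y :: D), wsteps_cons_cons y y D]
  refine ⟨A ++ x :: x :: C.reverse ++ y :: y :: D, ⟨by simp, ?_⟩, ?_, ?_, ?_⟩
  · -- steps ok
    intro p hp
    rw [h2', wsteps_reverse] at hp
    have hok := hW.2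
    rw [h1] at hok
    simp only [List.mem_append, List.mem_cons, List.mem_reverse, List.mem_map] at hp hok
    rcases hp with hp | hp | hp
    · exact hok p (Or.inl hp)
    · subst hp; exact Or.inl rfl
    · rcases hp with ⟨q, hq, rfl⟩ | hp | hp
      · rcases hok q (Or.inr (Or.inr (Or.inl hq))) with h | h
        · exact Or.inl h.symm
        · exact Or.inr h.symm
      · subst hp; exact Or.inl rfl
      · exact hok p (Or.inr (Or.inr (Or.inr (Or.inr hp))))
  · -- head?
    cases A <;> simp
  · -- members
    intro v hv
    simp only [List.mem_append, List.mem_cons, List.mem_reverse] at hv ⊢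
    tauto
  · -- length
    rw [wlen, wlen, h1, h2', wsteps_reverse]
    simp only [List.countP_append, List.countP_cons, List.countP_reverse, List.countP_map]
    have e1 : (List.countP ((fun p => decide (p.1 ≠ p.2)) ∘ Prod.swap) (wsteps (y :: C ++ [x])))
        = List.countP (fun p => decide (p.1 ≠ p.2)) (wsteps (y :: C ++ [x])) := by
      apply List.countP_congr
      intro p _
      simp [ne_comm]
    rw [e1]
    simp [hxy, Ne.symm hxy]
    omega

lemma trav_le [DecidableEq V] (W : List V) (x y : V) :
    trav W x y ≤ dirTrav W x y + dirTrav W y x := by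
  rw [trav, dirTrav, dirTrav]
  simp only [Bool.decide_and, Bool.decide_or]
  induction wsteps W with
  | nil => simp
  | cons p l ih =>
    simp only [List.countP_cons]
    by_cases e1 : p.1 = x <;> by_cases e2 : p.2 = y <;> by_cases e3 : p.1 = y <;>
      by_cases e4 : p.2 = x <;> simp [e1, e2, e3, e4] <;> omega

lemma improve [Fintype V] [DecidableEq V] {k : ℕ} (G : SimpleGraph V) (S : Fin k → List V)
    (hS : IsMinCover G S) (i : Fin k) (W' : List V) (hw : IsWalk G W')
    (hh : W'.head? = (S i).head?) (hmem : ∀ v ∈ S i, v ∈ W')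
    (hlen : wlen W' + 2 ≤ wlen (S i)) : False := by
  set S' := Function.update S i W' with hS'
  have hup : ∀ j, wlen (S' j) = Function.update (fun j => wlen (S j)) i (wlen W') j := by
    intro j
    exact Function.apply_update (fun _ l => wlen l) S i W' j
  have h1 : ∀ j, IsWalk G (S' j) := by
    intro j
    by_cases hj : j = i
    · subst hj; simpa [hS'] using hw
    · simpa [hS', Function.update_of_ne hj] using hS.1 j
  have h2 : Covers S' := by
    intro v
    obtain ⟨j, hj⟩ := hS.2.1 v
    by_cases hji : j = i
    · exact ⟨i, by simpa [hS'] using hmem v (hji ▸ hj)⟩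
    · exact ⟨j, by simpa [hS', Function.update_of_ne hji] using hj⟩
  have h3 : ∀ j, (S' j).head? = (S j).head? := by
    intro j
    by_cases hj : j = i
    · subst hj; simpa [hS'] using hh
    · simp [hS', Function.update_of_ne hj]
  have h4 := hS.2.2 S' h1 h2 h3
  have e1 : slen S' = wlen W' + ∑ j ∈ univ \ {i}, wlen (S j) := by
    rw [slen]
    rw [Finset.sum_congr rfl (fun j _ => hup j)]
    exact Finset.sum_update_of_mem (mem_univ i) _ _
  have e2 : slen S = wlen (S i) + ∑ j ∈ univ \ {i}, wlen (S j) := by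
    rw [slen, ← Finset.sum_update_of_mem (mem_univ i)]
    exact Finset.sum_congr rfl (fun j _ => by
      by_cases hj : j = i
      · subst hj; simp
      · simp [Function.update_of_ne hj])
  omega

/-- In a minimum-length covering strategy for a tree with k robots,
no robot traverses any edge of the tree more than twice. -/
theorem stmt0 {V : Type*} [Fintype V] [DecidableEq V] (G : SimpleGraph V) (hT : G.IsTree)
    {k : ℕ} (S : Fin k → List V) (hS : IsMinCover G S) :
    ∀ (i : Fin k) (x y : V), G.Adj x y → trav (S i) x y ≤ 2 := by
  intro i x y hadj
  by_contra hcon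
  push_neg at hcon
  have hxy : x ≠ y := G.ne_of_adj hadj
  have hle := trav_le (S i) x y
  have hcase : 2 ≤ dirTrav (S i) x y ∨ 2 ≤ dirTrav (S i) y x := by omega
  rcases hcase with h | h
  · obtain ⟨W', hw, hh, hmem, hlen⟩ := surgery G hxy (hS.1 i) h
    exact improve G S hS i W' hw hh hmem hlen
  · obtain ⟨W', hw, hh, hmem, hlen⟩ := surgery G hxy.symm (hS.1 i) h
    exact improve G S hS i W' hw hh hmem hlen
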